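/- For the path P_n on n vertices (n ≥ 3) with common vertex operation probability p and q = 1 - p, the domination reliability satisfies the recurrence DRel(P_n, p) = p^{n-2} + p·q·DRel(P_{n-2}, p) + q·Σ_{k=3}^{n-1} p^{k-2}·DRel(P_{n-k}, p), with DRel(P_1, p) = p and DRel(P_2, p) = 2p - p^2. -/

import Mathlib

open scoped Classical
open Finset

/-- The closed neighbourhood of a finite set of vertices `J` in `G`. -/
noncomputable def closedNbhd {V : Type*} [Fintype V] (G : SimpleGraph V) (J : Finset V) :
    Finset V :=
  Finset.univ.filter (fun v => v ∈ J ∨ ∃ j ∈ J, G.Adj j v)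

/-- `X` is a dominating set of `G`. -/
def IsDominating {V : Type*} (G : SimpleGraph V) (X : Finset V) : Prop :=
  ∀ v, v ∈ X ∨ ∃ x ∈ X, G.Adj x v

/-- Domination reliability: probability that the random set of operating vertices
(vertex `v` operating independently with probability `p v`) is a dominating set. -/
noncomputable def DRel {V : Type*} [Fintype V] (G : SimpleGraph V) (p : V → ℝ) : ℝ :=
  ∑ X ∈ Finset.univ.filter (fun X : Finset V => IsDominating G X),
    (∏ v ∈ X, p v) * ∏ v ∈ Xᶜ, (1 - p v)

noncomputable section PathAux

/-- weight of a subset `X` of `range n`. -/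
def pw (p : ℝ) (n : ℕ) (X : Finset ℕ) : ℝ := ∏ i ∈ range n, (if i ∈ X then p else 1 - p)

/-- all vertices of the path on `{0,...,n-1}` dominated. -/
def fcond (n : ℕ) (X : Finset ℕ) : Prop :=
  ∀ i < n, i ∈ X ∨ (1 ≤ i ∧ i - 1 ∈ X) ∨ (i + 1 < n ∧ i + 1 ∈ X)

/-- all vertices except the last one dominated. -/
def gcond (n : ℕ) (X : Finset ℕ) : Prop :=
  ∀ i, i + 1 < n → (i ∈ X ∨ (1 ≤ i ∧ i - 1 ∈ X) ∨ i + 1 ∈ X)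

def FF (p : ℝ) (n : ℕ) : ℝ :=
  ∑ X ∈ (range n).powerset, if fcond n X then pw p n X else 0

def GG (p : ℝ) (n : ℕ) : ℝ :=
  ∑ X ∈ (range n).powerset, if gcond n X then pw p n X else 0

variable {p : ℝ}

lemma pw_notmem {n : ℕ} {X : Finset ℕ} (h : n ∉ X) :
    pw p (n+1) X = (1 - p) * pw p n X := by
  rw [pw, prod_range_succ, if_neg h, pw, mul_comm]

lemma pw_insert {n : ℕ} {X : Finset ℕ} (h : X ⊆ range n) :
    pw p (n+1) (insert n X) = p * pw p n X := by
  rw [pw, prod_range_succ, if_pos (mem_insert_self _ _), pw, mul_comm]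
  congr 1
  refine prod_congr rfl fun i hi => ?_
  have : i ≠ n := by have := mem_range.1 hi; omega
  simp [mem_insert, this]

lemma P1 {n : ℕ} {t : Finset ℕ} (ht : t ⊆ range n) :
    gcond (n+1) t ↔ fcond n t := by
  constructor
  · intro h i hi
    rcases h i (by omega) with h1 | h1 | h1
    · exact Or.inl h1
    · exact Or.inr (Or.inl h1)
    · exact Or.inr (Or.inr ⟨mem_range.1 (ht h1), h1⟩)
  · intro h i hi
    rcases h i (by omega) with h1 | h1 | h1
    · exact Or.inl h1
    · exact Or.inr (Or.inl h1)
    · exact Or.inr (Or.inr h1.2)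

lemma P2 {n : ℕ} {t : Finset ℕ} (ht : t ⊆ range n) :
    gcond (n+1) (insert n t) ↔ gcond n t := by
  have hmem : ∀ j, j < n → (j ∈ insert n t ↔ j ∈ t) := by
    intro j hj; simp [mem_insert]; omega
  constructor
  · intro h i hi
    rcases h i (by omega) with h1 | h1 | h1
    · exact Or.inl ((hmem i (by omega)).1 h1)
    · exact Or.inr (Or.inl ⟨h1.1, (hmem _ (by omega)).1 h1.2⟩)
    · exact Or.inr (Or.inr ((hmem _ (by omega)).1 h1))
  · intro h i hi
    rcases Nat.lt_or_ge (i+1) n with hc | hc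
    · rcases h i hc with h1 | h1 | h1
      · exact Or.inl (mem_insert_of_mem h1)
      · exact Or.inr (Or.inl ⟨h1.1, mem_insert_of_mem h1.2⟩)
      · exact Or.inr (Or.inr (mem_insert_of_mem h1))
    · have : i + 1 = n := by omega
      exact Or.inr (Or.inr (by rw [this]; exact mem_insert_self _ _))

lemma P3 {n : ℕ} {t : Finset ℕ} (ht : t ⊆ range (n+1)) :
    fcond (n+2) (insert (n+1) t) ↔ gcond (n+1) t := by
  have hmem : ∀ j, j < n + 1 → (j ∈ insert (n+1) t ↔ j ∈ t) := by
    intro j hj; simp [mem_insert]; omega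
  constructor
  · intro h i hi
    rcases h i (by omega) with h1 | h1 | h1
    · exact Or.inl ((hmem i (by omega)).1 h1)
    · exact Or.inr (Or.inl ⟨h1.1, (hmem _ (by omega)).1 h1.2⟩)
    · exact Or.inr (Or.inr ((hmem _ (by omega)).1 h1.2))
  · intro h i hi
    rcases Nat.lt_or_ge (i+1) (n+1) with hc | hc
    · rcases h i hc with h1 | h1 | h1
      · exact Or.inl (mem_insert_of_mem h1)
      · exact Or.inr (Or.inl ⟨h1.1, mem_insert_of_mem h1.2⟩)
      · exact Or.inr (Or.inr ⟨by omega, mem_insert_of_mem h1⟩)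
    · -- i = n or i = n+1
      rcases Nat.lt_or_ge i (n+1) with hc2 | hc2
      · have : i + 1 = n + 1 := by omega
        exact Or.inr (Or.inr ⟨by omega, by rw [this]; exact mem_insert_self _ _⟩)
      · have : i = n + 1 := by omega
        exact Or.inl (by rw [this]; exact mem_insert_self _ _)

lemma P4 {n : ℕ} {t : Finset ℕ} (ht : t ⊆ range n) :
    ¬ fcond (n+2) t := by
  intro h
  rcases h (n+1) (by omega) with h1 | h1 | h1
  · exact absurd (mem_range.1 (ht h1)) (by omega)
  · have := mem_range.1 (ht h1.2); omega
  · omega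

lemma P5 {n : ℕ} {t : Finset ℕ} (ht : t ⊆ range n) :
    fcond (n+2) (insert n t) ↔ gcond n t := by
  have hmem : ∀ j, j < n → (j ∈ insert n t ↔ j ∈ t) := by
    intro j hj; simp [mem_insert]; omega
  constructor
  · intro h i hi
    rcases h i (by omega) with h1 | h1 | h1
    · exact Or.inl ((hmem i (by omega)).1 h1)
    · exact Or.inr (Or.inl ⟨h1.1, (hmem _ (by omega)).1 h1.2⟩)
    · exact Or.inr (Or.inr ((hmem _ (by omega)).1 h1.2))
  · intro h i hi
    rcases Nat.lt_or_ge (i+1) n with hc | hc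
    · rcases h i hc with h1 | h1 | h1
      · exact Or.inl (mem_insert_of_mem h1)
      · exact Or.inr (Or.inl ⟨h1.1, mem_insert_of_mem h1.2⟩)
      · exact Or.inr (Or.inr ⟨by omega, mem_insert_of_mem h1⟩)
    · rcases Nat.lt_or_ge i n with hc2 | hc2
      · have : i + 1 = n := by omega
        exact Or.inr (Or.inr ⟨by omega, by rw [this]; exact mem_insert_self _ _⟩)
      · rcases Nat.lt_or_ge i (n+1) with hc3 | hc3
        · have : i = n := by omega
          exact Or.inl (by rw [this]; exact mem_insert_self _ _)
        · have : i = n + 1 := by omega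
          refine Or.inr (Or.inl ⟨by omega, ?_⟩)
          have : i - 1 = n := by omega
          rw [this]; exact mem_insert_self _ _

lemma R2 (n : ℕ) : GG p (n+1) = p * GG p n + (1-p) * FF p n := by
  rw [GG, range_add_one, sum_powerset_insert (by simp)]
  have h1 : ∑ t ∈ (range n).powerset, (if gcond (n+1) t then pw p (n+1) t else 0)
      = (1-p) * FF p n := by
    rw [FF, mul_sum]
    refine sum_congr rfl fun t ht => ?_
    rw [mem_powerset] at ht
    by_cases h : fcond n t
    · rw [if_pos ((P1 ht).2 h), if_pos h, pw_notmem (fun hc => by have := mem_range.1 (ht hc); omega)]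
    · rw [if_neg (fun hc => h ((P1 ht).1 hc)), if_neg h, mul_zero]
  have h2 : ∑ t ∈ (range n).powerset, (if gcond (n+1) (insert n t) then pw p (n+1) (insert n t) else 0)
      = p * GG p n := by
    rw [GG, mul_sum]
    refine sum_congr rfl fun t ht => ?_
    rw [mem_powerset] at ht
    by_cases h : gcond n t
    · rw [if_pos ((P2 ht).2 h), if_pos h, pw_insert ht]
    · rw [if_neg (fun hc => h ((P2 ht).1 hc)), if_neg h, mul_zero]
  rw [h1, h2]; ring

lemma R1 (n : ℕ) : FF p (n+2) = p * GG p (n+1) + (1-p) * p * GG p n := by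
  rw [FF, range_add_one, sum_powerset_insert (by simp)]
  have h2 : ∑ t ∈ (range (n+1)).powerset,
      (if fcond (n+2) (insert (n+1) t) then pw p (n+2) (insert (n+1) t) else 0)
      = p * GG p (n+1) := by
    rw [GG, mul_sum]
    refine sum_congr rfl fun t ht => ?_
    rw [mem_powerset] at ht
    by_cases h : gcond (n+1) t
    · rw [if_pos ((P3 ht).2 h), if_pos h, pw_insert ht]
    · rw [if_neg (fun hc => h ((P3 ht).1 hc)), if_neg h, mul_zero]
  have h1 : ∑ t ∈ (range (n+1)).powerset, (if fcond (n+2) t then pw p (n+2) t else 0)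
      = (1-p) * p * GG p n := by
    rw [range_add_one, sum_powerset_insert (by simp)]
    have ha : ∑ t ∈ (range n).powerset, (if fcond (n+2) t then pw p (n+2) t else 0) = 0 := by
      refine sum_eq_zero fun t ht => ?_
      rw [mem_powerset] at ht
      rw [if_neg (P4 ht)]
    have hb : ∑ t ∈ (range n).powerset,
        (if fcond (n+2) (insert n t) then pw p (n+2) (insert n t) else 0)
        = (1-p) * p * GG p n := by
      rw [GG, mul_sum]
      refine sum_congr rfl fun t ht => ?_
      rw [mem_powerset] at ht
      by_cases h : gcond n t
      · rw [if_pos ((P5 ht).2 h), if_pos h]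
        have hnotin : (n+1) ∉ insert n t := by
          simp only [mem_insert]
          push_neg
          exact ⟨by omega, fun hc => by have := mem_range.1 (ht hc); omega⟩
        rw [pw_notmem hnotin, pw_insert ht]; ring
      · rw [if_neg (fun hc => h ((P5 ht).1 hc)), if_neg h, mul_zero]
    rw [ha, hb, zero_add]
  rw [h1, h2]; ring

lemma FF0 : FF p 0 = 1 := by
  rw [FF]
  simp [fcond, pw]

lemma GG0 : GG p 0 = 1 := by
  rw [GG]
  simp [gcond, pw]

lemma FF1 : FF p 1 = p := by
  rw [FF, show range 1 = insert 0 (range 0) from rfl,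
    sum_powerset_insert (by simp)]
  have h1 : ¬ fcond 1 (∅ : Finset ℕ) := by
    intro h; rcases h 0 (by omega) with h | h | h <;> simp_all
  have h2 : fcond 1 (insert 0 (∅ : Finset ℕ)) := by
    intro i hi
    have : i = 0 := by omega
    subst this; exact Or.inl (mem_insert_self _ _)
  rw [range_zero, powerset_empty, sum_singleton, sum_singleton, if_neg h1, if_pos h2, pw]
  simp

lemma L1 (n : ℕ) : FF p (n+2) = p * GG p n + p * (1-p) * FF p n := by
  have := R1 (p := p) n
  rw [R2 n] at this
  rw [this]; ring

lemma GG1 : GG p 1 = 1 := by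
  have := R2 (p := p) 0
  rw [GG0, FF0] at this
  rw [this]; ring

lemma FF2 : FF p 2 = 2 * p - p ^ 2 := by
  have := L1 (p := p) 0
  rw [GG0, FF0] at this
  rw [this]; ring

lemma rec3 (n : ℕ) : FF p (n+3) = p * FF p (n+2) + p * (1-p) * FF p (n+1)
    + p * (1-p)^2 * FF p n := by
  have l1 := L1 (p := p) (n+1)
  have l0 := L1 (p := p) n
  have r2 := R2 (p := p) n
  rw [show n+1+2 = n+3 from rfl] at l1
  linear_combination l1 + p * r2 - p * l0

lemma targetAux (m : ℕ) : FF p (m+3) = p^(m+1) + p*(1-p)*FF p (m+1)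
    + (1-p) * ∑ i ∈ range m, p^(i+1) * FF p (m - i) := by
  induction m with
  | zero =>
    have h := rec3 (p := p) 0
    norm_num at h ⊢
    rw [h, FF2, FF1, FF0]; ring
  | succ m ih =>
    have hs : ∑ i ∈ range (m+1), p^(i+1) * FF p (m+1-i)
        = p * FF p (m+1) + p * ∑ i ∈ range m, p^(i+1) * FF p (m-i) := by
      rw [sum_range_succ']
      have hterm : ∀ i ∈ range m, p^(i+1+1) * FF p (m+1-(i+1)) = p * (p^(i+1) * FF p (m-i)) := by
        intro i hi
        rw [Nat.succ_sub_succ]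
        ring
      rw [sum_congr rfl hterm, ← mul_sum, Nat.sub_zero, pow_one, add_comm]
    rw [hs]
    have h4 := rec3 (p := p) (m+1)
    rw [show m+1+1 = m+2 from rfl, show m+1+3 = m+4 from rfl] at *
    linear_combination h4 + p * ih

lemma dom_iff_fcond {n : ℕ} (X : Finset (Fin n)) :
    IsDominating (SimpleGraph.pathGraph n) X ↔ fcond n (X.map Fin.valEmbedding) := by
  have hmem : ∀ j : ℕ, j ∈ X.map Fin.valEmbedding ↔ ∃ v ∈ X, v.val = j := by
    intro j; simp [Finset.mem_map, Fin.valEmbedding]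
  constructor
  · intro h i hi
    rcases h ⟨i, hi⟩ with hv | ⟨x, hx, hadj⟩
    · exact Or.inl ((hmem i).2 ⟨⟨i, hi⟩, hv, rfl⟩)
    · rw [SimpleGraph.pathGraph_adj] at hadj
      have hxlt := x.isLt
      simp only [Fin.val_mk] at hadj
      rcases hadj with hl | hr
      · exact Or.inr (Or.inl ⟨by omega, (hmem _).2 ⟨x, hx, by omega⟩⟩)
      · exact Or.inr (Or.inr ⟨by omega, (hmem _).2 ⟨x, hx, by omega⟩⟩)
  · intro h v
    rcases h v.val v.isLt with h1 | ⟨h1, h2⟩ | ⟨h1, h2⟩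
    · rcases (hmem _).1 h1 with ⟨x, hx, hxv⟩
      exact Or.inl (by rwa [show x = v from Fin.ext hxv] at hx)
    · rcases (hmem _).1 h2 with ⟨x, hx, hxv⟩
      refine Or.inr ⟨x, hx, ?_⟩
      rw [SimpleGraph.pathGraph_adj]
      left; omega
    · rcases (hmem _).1 h2 with ⟨x, hx, hxv⟩
      refine Or.inr ⟨x, hx, ?_⟩
      rw [SimpleGraph.pathGraph_adj]
      right; omega

lemma weight_eq {n : ℕ} [DecidableEq (Fin n)] (p : ℝ) (X : Finset (Fin n)) :
    (∏ v ∈ X, p) * ∏ v ∈ Xᶜ, (1 - p) = pw p n (X.map Fin.valEmbedding) := by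
  have h1 : pw p n (X.map Fin.valEmbedding)
      = ∏ v : Fin n, (if v ∈ X then p else 1 - p) := by
    rw [pw, ← Fin.prod_univ_eq_prod_range (fun i => if i ∈ X.map Fin.valEmbedding then p else 1 - p) n]
    refine Finset.prod_congr rfl fun v _ => ?_
    congr 1
    simp only [Finset.mem_map, Fin.valEmbedding_apply, eq_iff_iff]
    constructor
    · rintro ⟨x, hx, hxv⟩; rwa [show x = v from Fin.ext hxv] at hx
    · intro hv; exact ⟨v, hv, rfl⟩
  rw [h1, ← Finset.prod_mul_prod_compl X (fun v => if v ∈ X then p else 1 - p)]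
  congr 1
  · exact Finset.prod_congr rfl fun v hv => (if_pos hv).symm
  · exact Finset.prod_congr rfl fun v hv => (if_neg (Finset.mem_compl.1 hv)).symm

lemma DRel_eq_FF (n : ℕ) (p : ℝ) :
    DRel (SimpleGraph.pathGraph n) (fun _ => p) = FF p n := by
  rw [DRel, FF]
  rw [← Finset.sum_filter]
  refine Finset.sum_nbij' (fun X => X.map Fin.valEmbedding)
    (fun Y => Finset.univ.filter (fun v : Fin n => v.val ∈ Y)) ?_ ?_ ?_ ?_ ?_
  · intro X hX
    rw [Finset.mem_filter] at hX ⊢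
    refine ⟨Finset.mem_powerset.2 ?_, (dom_iff_fcond X).1 hX.2⟩
    intro j hj
    rcases Finset.mem_map.1 hj with ⟨v, _, hv⟩
    simpa [← hv] using v.isLt
  · intro Y hY
    rw [Finset.mem_filter] at hY
    exact Finset.mem_filter.2 ⟨Finset.mem_univ _, by
      rw [dom_iff_fcond]
      have : (Finset.univ.filter (fun v : Fin n => v.val ∈ Y)).map Fin.valEmbedding = Y := by
        ext j
        simp only [Finset.mem_map, Finset.mem_filter, Finset.mem_univ, true_and,
          Fin.valEmbedding_apply]
        constructor
        · rintro ⟨v, hv, rfl⟩; exact hv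
        · intro hj
          have hjn : j < n := Finset.mem_range.1 (Finset.mem_powerset.1 hY.1 hj)
          exact ⟨⟨j, hjn⟩, hj, rfl⟩
      rw [this]; exact hY.2⟩
  · intro X hX
    ext v
    simp only [Finset.mem_filter, Finset.mem_univ, true_and, Finset.mem_map,
      Fin.valEmbedding_apply]
    constructor
    · rintro ⟨x, hx, hxv⟩; rwa [show x = v from Fin.ext hxv] at hx
    · intro hv; exact ⟨v, hv, rfl⟩
  · intro Y hY
    rw [Finset.mem_filter] at hY
    ext j
    simp only [Finset.mem_map, Finset.mem_filter, Finset.mem_univ, true_and,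
      Fin.valEmbedding_apply]
    constructor
    · rintro ⟨v, hv, rfl⟩; exact hv
    · intro hj
      have hjn : j < n := Finset.mem_range.1 (Finset.mem_powerset.1 hY.1 hj)
      exact ⟨⟨j, hjn⟩, hj, rfl⟩
  · intro X hX
    exact @weight_eq n (fun a b => Classical.propDecidable (a = b)) p X

end PathAux

theorem drel_path_recurrence (n : ℕ) (hn : 3 ≤ n) (p : ℝ)
    (hp : p ∈ Set.Icc (0 : ℝ) 1) :
    (DRel (SimpleGraph.pathGraph 1) (fun _ => p) = p ∧
      DRel (SimpleGraph.pathGraph 2) (fun _ => p) = 2 * p - p ^ 2) ∧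
    DRel (SimpleGraph.pathGraph n) (fun _ => p) =
      p ^ (n - 2) + p * (1 - p) * DRel (SimpleGraph.pathGraph (n - 2)) (fun _ => p)
        + (1 - p) * ∑ k ∈ Finset.Icc 3 (n - 1),
            p ^ (k - 2) * DRel (SimpleGraph.pathGraph (n - k)) (fun _ => p) := by
  obtain ⟨m, rfl⟩ : ∃ m, n = m + 3 := ⟨n - 3, by omega⟩
  refine ⟨⟨by rw [DRel_eq_FF, FF1], by rw [DRel_eq_FF, FF2]⟩, ?_⟩
  have hIcc : ∑ k ∈ Finset.Icc 3 (m + 3 - 1),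
      p ^ (k - 2) * DRel (SimpleGraph.pathGraph (m + 3 - k)) (fun _ => p)
      = ∑ i ∈ range m, p ^ (i + 1) * FF p (m - i) := by
    refine Finset.sum_nbij' (fun k => k - 3) (fun i => i + 3) ?_ ?_ ?_ ?_ ?_
    · intro k hk; simp only [Finset.mem_Icc] at hk; simp only [Finset.mem_range]; omega
    · intro i hi; simp only [Finset.mem_range] at hi; simp only [Finset.mem_Icc]; omega
    · intro k hk; simp only [Finset.mem_Icc] at hk; show k - 3 + 3 = k; omega
    · intro i _; show i + 3 - 3 = i; omega
    · intro k hk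
      simp only [Finset.mem_Icc] at hk
      rw [DRel_eq_FF, show m + 3 - k = m - (k - 3) from by omega,
        show k - 2 = (k - 3) + 1 from by omega]
  rw [hIcc, show m + 3 - 2 = m + 1 from by omega, DRel_eq_FF, DRel_eq_FF]
  exact targetAux m
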